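/- For all k ≥ 2 and n ≥ k − 1, ∑_{j=1}^k (−α)^j · ŵ_α(k,j) · (n+j)! = (−α)^k · n!·(n+1)!/(n−k+1)!. -/

import Mathlib

open Finset

/-- The unsigned Lah numbers. -/
def lah (n k : ℕ) : ℕ :=
  if k = 0 then (if n = 0 then 1 else 0)
  else (n - 1).choose (k - 1) * (n.factorial / k.factorial)

/-- The translated Whitney-Lah numbers `ŵ_α(n,k) = α^{n-k}·L(n,k)`. -/
def whitneyLah (α : ℝ) (n k : ℕ) : ℝ := α ^ (n - k) * (lah n k : ℝ)

lemma fin_diff (f : ℕ → ℝ) (m : ℕ) :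
    ∑ i ∈ range (m+2), (-1:ℝ)^i * ((m+1).choose i) * f i
      = ∑ i ∈ range (m+1), (-1:ℝ)^i * (m.choose i) * (f i - f (i+1)) := by
  have h : ∑ i ∈ range (m+1), (-1:ℝ)^i * (m.choose i) * (f i - f (i+1))
      = ∑ i ∈ range (m+1), (-1:ℝ)^i * (m.choose i) * f i
        + ∑ i ∈ range (m+1), (-1:ℝ)^(i+1) * (m.choose i) * f (i+1) := by
    rw [← Finset.sum_add_distrib]
    exact Finset.sum_congr rfl (fun i _ => by ring)
  rw [h]
  rw [Finset.sum_range_succ' (fun i => (-1:ℝ)^i * ((m+1).choose i) * f i) (m+1)]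
  have h2 : ∀ i ∈ range (m+1),
      (-1:ℝ)^(i+1) * ((m+1).choose (i+1)) * f (i+1)
        = (-1:ℝ)^(i+1) * (m.choose i) * f (i+1)
          + (-1:ℝ)^(i+1) * (m.choose (i+1)) * f (i+1) := by
    intro i _
    rw [Nat.choose_succ_succ]
    push_cast
    ring
  rw [Finset.sum_congr rfl h2, Finset.sum_add_distrib]
  have e1 : ∑ i ∈ range (m+2), (-1:ℝ)^i * (m.choose i) * f i
      = ∑ i ∈ range (m+1), (-1:ℝ)^i * (m.choose i) * f i := by
    rw [Finset.sum_range_succ]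
    simp
  have h3 : ∑ i ∈ range (m+1), (-1:ℝ)^i * (m.choose i) * f i
      = ∑ i ∈ range (m+1), (-1:ℝ)^(i+1) * (m.choose (i+1)) * f (i+1)
        + (-1:ℝ)^0 * (m.choose 0) * f 0 := by
    rw [← e1]
    exact Finset.sum_range_succ' (fun i => (-1:ℝ)^i * (m.choose i) * f i) (m+1)
  rw [h3]
  simp
  ring

lemma key_sum : ∀ (m K N : ℕ), m ≤ K →
    ∑ i ∈ range (m+1), (-1:ℝ)^i * (m.choose i) * ((N+i).choose K) =
      (-1:ℝ)^m * ((N.choose (K-m) : ℕ) : ℝ) := by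
  intro m
  induction m with
  | zero => intro K N _; simp
  | succ m ih =>
    intro K N hm
    cases K with
    | zero => omega
    | succ K =>
      rw [show m + 1 + 1 = m + 2 from rfl,
        fin_diff (fun i => (((N+i).choose (K+1) : ℕ) : ℝ)) m]
      have hp : ∀ i ∈ range (m+1),
          (-1:ℝ)^i * (m.choose i) *
            ((((N+i).choose (K+1) : ℕ) : ℝ) - (((N+(i+1)).choose (K+1) : ℕ) : ℝ))
          = -((-1:ℝ)^i * (m.choose i) * (((N+i).choose K : ℕ) : ℝ)) := by
        intro i _
        have : N + (i+1) = (N + i) + 1 := by ring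
        rw [this, Nat.choose_succ_succ]
        push_cast
        ring
      rw [Finset.sum_congr rfl hp, Finset.sum_neg_distrib, ih K N (by omega)]
      have : K + 1 - (m + 1) = K - m := by omega
      rw [this]
      ring

/-- For all `k ≥ 2` and `n ≥ k − 1`,
`∑_{j=1}^k (−α)^j · ŵ_α(k,j) · (n+j)! = (−α)^k · n!·(n+1)!/(n−k+1)!`. -/
theorem whitneyLah_alternating_sum (α : ℝ) (k n : ℕ) (hk : 2 ≤ k) (hn : k - 1 ≤ n) :
    ∑ j ∈ Finset.Icc 1 k, (-α) ^ j * whitneyLah α k j * ((n + j).factorial : ℝ) =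
      (-α) ^ k * (n.factorial : ℝ) * ((n + 1).factorial : ℝ) /
        ((n + 1 - k).factorial : ℝ) := by
  have hIcc : Finset.Icc 1 k = Finset.Ico 1 (k+1) := by
    rw [Finset.Ico_add_one_right_eq_Icc]
  rw [hIcc, Finset.sum_Ico_eq_sum_range]
  have hrange : k + 1 - 1 = k := by omega
  rw [hrange]
  have hterm : ∀ i ∈ range k,
      (-α)^(1+i) * whitneyLah α k (1+i) * ((n + (1+i)).factorial : ℝ)
        = (-(α^k * (k.factorial : ℝ) * (n.factorial : ℝ)))
          * ((-1:ℝ)^i * (((k-1).choose i : ℕ) : ℝ) * ((((n+1)+i).choose n : ℕ) : ℝ)) := by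
    intro i hi
    rw [mem_range] at hi
    unfold whitneyLah lah
    rw [if_neg (by omega)]
    have h1i : 1 + i - 1 = i := by omega
    rw [h1i]
    have hd : (1+i).factorial ∣ k.factorial := Nat.factorial_dvd_factorial (by omega)
    have hfac : ((k.factorial / (1+i).factorial : ℕ) : ℝ)
        = (k.factorial : ℝ) / ((1+i).factorial : ℝ) := by
      rw [Nat.cast_div hd (by positivity)]
    have hch : ((((n+1)+i).choose n : ℕ) : ℝ) * (n.factorial : ℝ) * ((1+i).factorial : ℝ)
        = ((n + (1+i)).factorial : ℝ) := by
      have h := Nat.choose_mul_factorial_mul_factorial (show n ≤ n+1+i by omega)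
      have h2 : n + 1 + i - n = 1 + i := by omega
      rw [h2] at h
      have h3 : n + (1+i) = n + 1 + i := by omega
      rw [h3]
      exact_mod_cast h
    have hpow : α ^ (k - (1+i)) * α^(1+i) = α ^ k := by
      rw [← pow_add]
      congr 1
      omega
    have hneg : (-α)^(1+i) = (-1:ℝ)^(1+i) * α^(1+i) := by
      rw [neg_pow]
    have hne : ((1+i).factorial : ℝ) ≠ 0 := by positivity
    push_cast [hfac]
    rw [hneg]
    field_simp
    rw [← hch, ← hpow]
    ring
  rw [Finset.sum_congr rfl hterm, ← Finset.mul_sum]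
  have hk1 : k = (k-1) + 1 := by omega
  rw [show range k = range ((k-1)+1) by rw [← hk1]]
  rw [key_sum (k-1) n (n+1) hn]
  have hsub : n - (k-1) = n + 1 - k := by omega
  rw [hsub]
  have hkn : k ≤ n + 1 := by omega
  rw [Nat.choose_symm hkn]
  have hchoose : ((n+1).choose k : ℝ) * ((n+1-k).factorial : ℝ) * (k.factorial : ℝ)
      = ((n+1).factorial : ℝ) := by
    have h := Nat.choose_mul_factorial_mul_factorial hkn
    push_cast [← h]
    ring
  have hne : ((n+1-k).factorial : ℝ) ≠ 0 := by positivity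
  have hsign : (-1:ℝ)^(k-1) * (-1:ℝ) = (-1:ℝ)^k := by
    rw [← pow_succ]
    congr 1
    omega
  rw [neg_pow α k]
  field_simp
  rw [← hchoose, ← hsign]
  ring
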